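/- Under the above ergodicity and integrability assumptions (E|ln L|<∞, E|ln δ|<∞, E ln L<0), there exists a random variable γ(ω)>0 such that almost surely γ(ω)≤δ_0(ω) and L_t(ω)···L_1(ω)γ(ω)≤δ_t(ω) for all t=1,2,..., where L_t(ω)=L(T^{t-1}ω) and δ_t(ω)=δ(T^t ω). -/

import Mathlib

open MeasureTheory Filter Finset

section Aux

variable {Ω : Type*} [MeasurableSpace Ω]

/-- The Garsia maximal functions `M n = max (0, S_1, …, S_n)` defined recursively. -/
noncomputable def maxS (T : Ω → Ω) (f : Ω → ℝ) : ℕ → Ω → ℝ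
  | 0 => fun _ => 0
  | n + 1 => fun ω => max 0 (f ω + maxS T f n (T ω))

lemma maxS_nonneg (T : Ω → Ω) (f : Ω → ℝ) (n : ℕ) (ω : Ω) : 0 ≤ maxS T f n ω := by
  cases n with
  | zero => exact le_refl 0
  | succ n => exact le_max_left _ _

lemma maxS_mono (T : Ω → Ω) (f : Ω → ℝ) : ∀ n ω, maxS T f n ω ≤ maxS T f (n + 1) ω := by
  intro n
  induction n with
  | zero => intro ω; exact maxS_nonneg T f 1 ω
  | succ n ih =>
      intro ω
      exact max_le (le_max_left _ _)
        (le_max_of_le_right (by linarith [ih (T ω)]))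

lemma maxS_measurable {T : Ω → Ω} {f : Ω → ℝ} (hT : Measurable T) (hf : Measurable f) :
    ∀ n, Measurable (maxS T f n) := by
  intro n
  induction n with
  | zero => exact measurable_const
  | succ n ih => exact measurable_const.max (hf.add (ih.comp hT))

lemma maxS_integrable {μ : Measure Ω} [IsFiniteMeasure μ] {T : Ω → Ω} {f : Ω → ℝ}
    (hT : MeasurePreserving T μ μ) (hf : Measurable f) (hfi : Integrable f μ) :
    ∀ n, Integrable (maxS T f n) μ := by
  intro n
  induction n with
  | zero => exact integrable_const 0
  | succ n ih =>
      have hcomp : Integrable (fun ω => maxS T f n (T ω)) μ :=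
        (hT.integrable_comp ih.aestronglyMeasurable).2 ih
      have : Integrable (fun ω => f ω + maxS T f n (T ω)) μ := hfi.add hcomp
      simpa [maxS, Pi.sup_def] using (integrable_const (0 : ℝ)).sup this

lemma maxS_ge_sum (T : Ω → Ω) (f : Ω → ℝ) :
    ∀ n k, k ≤ n → ∀ ω, (∑ i ∈ range k, f (T^[i] ω)) ≤ maxS T f n ω := by
  intro n
  induction n with
  | zero =>
      intro k hk ω
      interval_cases k
      simp [maxS]
  | succ n ih =>
      intro k hk ω
      cases k with
      | zero => simpa using maxS_nonneg T f (n + 1) ω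
      | succ k =>
          have hsum : (∑ i ∈ range (k + 1), f (T^[i] ω))
              = (∑ i ∈ range k, f (T^[i] (T ω))) + f ω := by
            rw [Finset.sum_range_succ']
            simp [Function.iterate_succ_apply]
          rw [hsum]
          have := ih k (Nat.succ_le_succ_iff.1 hk) (T ω)
          exact le_max_of_le_right (by linarith)

/-- Garsia's maximal ergodic inequality. -/
lemma garsia {μ : Measure Ω} [IsProbabilityMeasure μ] {T : Ω → Ω} {f : Ω → ℝ}
    (hT : MeasurePreserving T μ μ) (hf : Measurable f) (hfi : Integrable f μ) (n : ℕ) :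
    0 ≤ ∫ ω in {ω | 0 < maxS T f (n + 1) ω}, f ω ∂μ := by
  set M := maxS T f (n + 1) with hM
  set E : Set Ω := {ω | 0 < M ω} with hE
  have hMmeas : Measurable M := maxS_measurable hT.measurable hf (n + 1)
  have hEmeas : MeasurableSet E := measurableSet_lt measurable_const hMmeas
  have hMint : Integrable M μ := maxS_integrable hT hf hfi (n + 1)
  have hMTint : Integrable (fun ω => M (T ω)) μ :=
    (hT.integrable_comp hMint.aestronglyMeasurable).2 hMint
  -- pointwise: on E, M ω - M (T ω) ≤ f ω
  have key : ∀ ω ∈ E, M ω - M (T ω) ≤ f ω := by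
    intro ω hω
    have h1 : M ω = f ω + maxS T f n (T ω) := by
      have : (0 : ℝ) < max 0 (f ω + maxS T f n (T ω)) := hω
      have h2 : (0 : ℝ) < f ω + maxS T f n (T ω) := by
        by_contra h
        push_neg at h
        simp [max_eq_left h] at this
      simpa [hM, maxS] using max_eq_right h2.le
    have h3 : maxS T f n (T ω) ≤ M (T ω) := maxS_mono T f n (T ω)
    linarith
  have step1 : ∫ ω in E, (M ω - M (T ω)) ∂μ ≤ ∫ ω in E, f ω ∂μ := by
    refine setIntegral_mono_on ((hMint.sub hMTint).integrableOn)
      hfi.integrableOn hEmeas key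
  have step2 : ∫ ω in E, M ω ∂μ = ∫ ω, M ω ∂μ := by
    refine setIntegral_eq_integral_of_forall_compl_eq_zero fun ω hω => ?_
    have h1 : ¬ 0 < M ω := hω
    exact le_antisymm (not_lt.1 h1) (maxS_nonneg T f (n + 1) ω)
  have step3 : ∫ ω in E, M (T ω) ∂μ ≤ ∫ ω, M (T ω) ∂μ :=
    setIntegral_le_integral hMTint
      (Filter.Eventually.of_forall fun ω => maxS_nonneg T f (n + 1) (T ω))
  have step4 : ∫ ω, M (T ω) ∂μ = ∫ ω, M ω ∂μ := by
    calc ∫ ω, M (T ω) ∂μ = ∫ ω, M ω ∂(Measure.map T μ) :=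
          (integral_map hT.measurable.aemeasurable
            (by rw [hT.map_eq]; exact hMint.aestronglyMeasurable)).symm
      _ = ∫ ω, M ω ∂μ := by rw [hT.map_eq]
  have hsub : ∫ ω in E, (M ω - M (T ω)) ∂μ
      = (∫ ω in E, M ω ∂μ) - ∫ ω in E, M (T ω) ∂μ :=
    integral_sub hMint.integrableOn hMTint.integrableOn
  linarith

/-- If `T` is ergodic and `∫ f < 0`, then almost surely the ergodic sums of `f`
are bounded above. -/
lemma ae_bddAbove_sums {μ : Measure Ω} [IsProbabilityMeasure μ] {T : Ω → Ω} {f : Ω → ℝ}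
    (hT : Ergodic T μ) (hf : Measurable f) (hfi : Integrable f μ)
    (hneg : ∫ ω, f ω ∂μ < 0) :
    ∀ᵐ ω ∂μ, ∃ C : ℝ, ∀ k : ℕ, (∑ i ∈ range k, f (T^[i] ω)) ≤ C := by
  have hTm : MeasurePreserving T μ μ := hT.toMeasurePreserving
  set S : ℕ → Ω → ℝ := fun k ω => ∑ i ∈ range k, f (T^[i] ω) with hS
  have hSmeas : ∀ k, Measurable (S k) := fun k =>
    Finset.measurable_sum _ fun i _ => hf.comp (hTm.measurable.iterate i)
  have hrec : ∀ k ω, S (k + 1) ω = S k (T ω) + f ω := by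
    intro k ω
    rw [hS]
    simp only
    rw [Finset.sum_range_succ']
    simp [Function.iterate_succ_apply]
  set G : Set Ω := {ω | ∃ C : ℝ, ∀ k : ℕ, S k ω ≤ C} with hG
  have hGbdd : G = {ω | BddAbove (Set.range fun k => S k ω)} := by
    ext ω
    constructor
    · rintro ⟨C, hC⟩
      exact ⟨C, by rintro x ⟨k, rfl⟩; exact hC k⟩
    · rintro ⟨C, hC⟩
      exact ⟨C, fun k => hC (Set.mem_range_self k)⟩
  have hGmeas : MeasurableSet G := by
    rw [hGbdd]; exact measurableSet_bddAbove_range hSmeas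
  have hGinv : T ⁻¹' G = G := by
    ext ω
    simp only [Set.mem_preimage, hG, Set.mem_setOf_eq]
    constructor
    · rintro ⟨C, hC⟩
      refine ⟨max 0 (C + f ω), fun k => ?_⟩
      cases k with
      | zero => simp [hS]
      | succ k =>
          rw [hrec]
          exact le_max_of_le_right (by linarith [hC k])
    · rintro ⟨C, hC⟩
      refine ⟨C - f ω, fun k => ?_⟩
      have := hC (k + 1)
      rw [hrec] at this
      linarith
  rcases hT.toPreErgodic.measure_self_or_compl_eq_zero hGmeas hGinv with h | h
  · -- μ G = 0 leads to a contradiction via the maximal ergodic inequality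
    exfalso
    set E : ℕ → Set Ω := fun n => {ω | 0 < maxS T f (n + 1) ω} with hEdef
    have hEmeas : ∀ n, MeasurableSet (E n) :=
      fun n => measurableSet_lt measurable_const (maxS_measurable hTm.measurable hf (n + 1))
    have hEmono : Monotone E := by
      refine monotone_nat_of_le_succ fun n ω hω => ?_
      exact lt_of_lt_of_le hω (maxS_mono T f (n + 1) ω)
    set U : Set Ω := ⋃ n, E n with hU
    have hGU : Gᶜ ⊆ U := by
      intro ω hω
      simp only [hG, Set.mem_compl_iff, Set.mem_setOf_eq, not_exists, not_forall] at hω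
      obtain ⟨k, hk⟩ := hω 0
      refine Set.mem_iUnion.2 ⟨k, ?_⟩
      have h1 : S k ω ≤ maxS T f (k + 1) ω := maxS_ge_sum T f (k + 1) k (Nat.le_succ k) ω
      exact lt_of_lt_of_le (not_le.1 hk) h1
    have hUc : μ Uᶜ = 0 := by
      have : Uᶜ ⊆ G := by
        intro ω hω
        by_contra hg
        exact hω (hGU hg)
      exact le_antisymm (le_trans (measure_mono this) h.le) zero_le
    have htend : Tendsto (fun n => ∫ ω in E n, f ω ∂μ) atTop (nhds (∫ ω in U, f ω ∂μ)) :=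
      tendsto_setIntegral_of_monotone hEmeas hEmono hfi.integrableOn
    have hpos : 0 ≤ ∫ ω in U, f ω ∂μ :=
      ge_of_tendsto' htend fun n => garsia hTm hf hfi n
    have hUint : ∫ ω in U, f ω ∂μ = ∫ ω, f ω ∂μ := by
      have h2 : μ.restrict U = μ.restrict Set.univ :=
        Measure.restrict_congr_set (MeasureTheory.ae_eq_univ.2 hUc)
      rw [Measure.restrict_univ] at h2
      rw [h2]
    rw [hUint] at hpos
    linarith
  · -- μ Gᶜ = 0 is exactly the claim
    rw [MeasureTheory.ae_iff]
    have heq : {ω | ¬ ∃ C : ℝ, ∀ k : ℕ, S k ω ≤ C} = Gᶜ := by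
      ext ω; simp [hG]
    rw [heq]
    exact h

end Aux

/-- Existence of a random variable `γ > 0` with `γ ≤ δ_0` and `L_t⋯L_1 γ ≤ δ_t` a.s. -/
theorem stmt2 {Ω : Type*} [MeasurableSpace Ω] (μ : Measure Ω) [IsProbabilityMeasure μ]
    (T : Ω → Ω) (hT : Ergodic T μ)
    (L δ : Ω → ℝ) (hLmeas : Measurable L) (hδmeas : Measurable δ)
    (hLpos : ∀ ω, 0 < L ω) (hδpos : ∀ ω, 0 < δ ω)
    (hLint : Integrable (fun ω => Real.log (L ω)) μ)
    (hδint : Integrable (fun ω => Real.log (δ ω)) μ)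
    (hLneg : ∫ ω, Real.log (L ω) ∂μ < 0) :
    ∃ γ : Ω → ℝ, Measurable γ ∧ (∀ ω, 0 < γ ω) ∧
      ∀ᵐ ω ∂μ, γ ω ≤ δ ω ∧
        ∀ t : ℕ, 1 ≤ t → (∏ i ∈ Finset.range t, L (T^[i] ω)) * γ ω ≤ δ (T^[t] ω) := by
  have hTm : MeasurePreserving T μ μ := hT.toMeasurePreserving
  -- the auxiliary function h = log L + log δ - log δ ∘ T
  set h : Ω → ℝ := fun ω => Real.log (L ω) + (Real.log (δ ω) - Real.log (δ (T ω))) with hh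
  have hδTint : Integrable (fun ω => Real.log (δ (T ω))) μ :=
    (hTm.integrable_comp hδint.aestronglyMeasurable).2 hδint
  have hmeas : Measurable h :=
    (Real.measurable_log.comp hLmeas).add
      ((Real.measurable_log.comp hδmeas).sub
        ((Real.measurable_log.comp hδmeas).comp hTm.measurable))
  have hint : Integrable h μ := hLint.add (hδint.sub hδTint)
  have hδTeq : ∫ ω, Real.log (δ (T ω)) ∂μ = ∫ ω, Real.log (δ ω) ∂μ := by
    calc ∫ ω, Real.log (δ (T ω)) ∂μ = ∫ ω, Real.log (δ ω) ∂(Measure.map T μ) :=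
          (integral_map hTm.measurable.aemeasurable
            (by rw [hTm.map_eq]; exact hδint.aestronglyMeasurable)).symm
      _ = ∫ ω, Real.log (δ ω) ∂μ := by rw [hTm.map_eq]
  have hsubint : Integrable (fun ω => Real.log (δ ω) - Real.log (δ (T ω))) μ :=
    hδint.sub hδTint
  have hneg : ∫ ω, h ω ∂μ < 0 := by
    calc ∫ ω, h ω ∂μ
        = ∫ ω, (Real.log (L ω) + (Real.log (δ ω) - Real.log (δ (T ω)))) ∂μ := rfl
      _ = (∫ ω, Real.log (L ω) ∂μ)
            + ∫ ω, (Real.log (δ ω) - Real.log (δ (T ω))) ∂μ := integral_add hLint hsubint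
      _ = (∫ ω, Real.log (L ω) ∂μ)
            + ((∫ ω, Real.log (δ ω) ∂μ) - ∫ ω, Real.log (δ (T ω)) ∂μ) := by
          rw [integral_sub hδint hδTint]
      _ < 0 := by rw [hδTeq]; simpa using hLneg
  -- almost surely the ergodic sums of h are bounded above
  have hbd := ae_bddAbove_sums hT hmeas hint hneg
  -- telescoping identity
  have htel : ∀ (ω : Ω) (k : ℕ), (∑ i ∈ Finset.range k, h (T^[i] ω))
      = (∑ i ∈ Finset.range k, Real.log (L (T^[i] ω)))
        + (Real.log (δ ω) - Real.log (δ (T^[k] ω))) := by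
    intro ω k
    have : (∑ i ∈ Finset.range k,
        (Real.log (δ (T^[i] ω)) - Real.log (δ (T^[i + 1] ω))))
        = Real.log (δ (T^[0] ω)) - Real.log (δ (T^[k] ω)) :=
      Finset.sum_range_sub' (fun i => Real.log (δ (T^[i] ω))) k
    simp only [Function.iterate_zero_apply] at this
    rw [hh]
    simp only [Finset.sum_add_distrib]
    rw [← this]
    congr 1
    refine Finset.sum_congr rfl fun i _ => ?_
    rw [Function.iterate_succ_apply']
  -- the candidate γ
  set g : ℕ → Ω → ℝ := fun k ω =>
    (∑ i ∈ Finset.range k, Real.log (L (T^[i] ω))) - Real.log (δ (T^[k] ω)) with hg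
  have hgmeas : ∀ k, Measurable (g k) := by
    intro k
    exact (Finset.measurable_sum _ fun i _ =>
        (Real.measurable_log.comp hLmeas).comp (hTm.measurable.iterate i)).sub
      ((Real.measurable_log.comp hδmeas).comp (hTm.measurable.iterate k))
  set γ : Ω → ℝ := fun ω => Real.exp (-(⨆ k, g k ω)) with hγ
  refine ⟨γ, Real.measurable_exp.comp (Measurable.iSup hgmeas).neg,
    fun ω => Real.exp_pos _, ?_⟩
  filter_upwards [hbd] with ω hω
  obtain ⟨C, hC⟩ := hω
  have hbdd : BddAbove (Set.range fun k => g k ω) := by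
    refine ⟨C - Real.log (δ ω), ?_⟩
    rintro x ⟨k, rfl⟩
    have := hC k
    rw [htel ω k] at this
    simp only [hg]
    linarith
  have hmain : ∀ t : ℕ, (∏ i ∈ Finset.range t, L (T^[i] ω)) * γ ω ≤ δ (T^[t] ω) := by
    intro t
    have hle : g t ω ≤ ⨆ k, g k ω := le_ciSup hbdd t
    have hprodpos : 0 < ∏ i ∈ Finset.range t, L (T^[i] ω) :=
      Finset.prod_pos fun i _ => hLpos _
    have hlogprod : Real.log (∏ i ∈ Finset.range t, L (T^[i] ω))
        = ∑ i ∈ Finset.range t, Real.log (L (T^[i] ω)) :=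
      Real.log_prod fun i _ => (hLpos _).ne'
    calc (∏ i ∈ Finset.range t, L (T^[i] ω)) * γ ω
        = Real.exp (Real.log (∏ i ∈ Finset.range t, L (T^[i] ω)) + (-(⨆ k, g k ω))) := by
          rw [Real.exp_add, Real.exp_log hprodpos]
      _ ≤ Real.exp (Real.log (δ (T^[t] ω))) := by
          apply Real.exp_le_exp.2
          rw [hlogprod]
          simp only [hg] at hle
          linarith
      _ = δ (T^[t] ω) := Real.exp_log (hδpos _)
  refine ⟨?_, fun t _ => hmain t⟩
  have := hmain 0
  simpa using this
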